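/- Let L ∈ ℂ^{n×n}, let M ∈ ℂ^{n×r} have full column rank with columns that are right eigenvectors of L for eigenvalues λ_1,…,λ_r, and set Λ = diag(λ_1,…,λ_r). Then for any N ∈ ℂ^{r×n}, the characteristic polynomial of L + MN equals the characteristic polynomial of Λ + NM times ∏_{j=r+1}^{n}(x − λ_j), where λ_{r+1},…,λ_n are the remaining eigenvalues of L (with multiplicity). -/
import Mathlib


open Matrix Polynomial

/-- Key determinant identity: if `A M = M D` with `A, D` invertible, then
`det (A - M N) * det D = det A * det (D - N M)`. -/
lemma rado_det_key {K : Type*} [Field K] {n r : Type*} [Fintype n] [Fintype r]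
    [DecidableEq n] [DecidableEq r]
    (A : Matrix n n K) (D : Matrix r r K) (M : Matrix n r K) (N : Matrix r n K)
    (hA : IsUnit A.det) (hD : IsUnit D.det) (h : A * M = M * D) :
    (A - M * N).det * D.det = A.det * (D - N * M).det := by
  have hA1 : A * A⁻¹ = 1 := Matrix.mul_nonsing_inv A hA
  have hA2 : A⁻¹ * A = 1 := Matrix.nonsing_inv_mul A hA
  have hD1 : D * D⁻¹ = 1 := Matrix.mul_nonsing_inv D hD
  have hD2 : D⁻¹ * D = 1 := Matrix.nonsing_inv_mul D hD
  have hMD : M * D⁻¹ = A⁻¹ * M := by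
    calc M * D⁻¹ = (A⁻¹ * A) * M * D⁻¹ := by rw [hA2, Matrix.one_mul]
      _ = A⁻¹ * (A * M) * D⁻¹ := by rw [Matrix.mul_assoc A⁻¹ A M]
      _ = A⁻¹ * (M * D) * D⁻¹ := by rw [h]
      _ = A⁻¹ * M * (D * D⁻¹) := by
          rw [← Matrix.mul_assoc A⁻¹ M D, Matrix.mul_assoc (A⁻¹ * M) D D⁻¹]
      _ = A⁻¹ * M := by rw [hD1, Matrix.mul_one]
  have key1 : A - M * N = A * (1 - M * D⁻¹ * N) := by
    rw [Matrix.mul_sub, Matrix.mul_one, hMD, Matrix.mul_assoc A⁻¹ M N,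
      ← Matrix.mul_assoc A A⁻¹ (M * N), hA1, Matrix.one_mul]
  have key2 : (1 - M * D⁻¹ * N).det = (D - N * M).det * D⁻¹.det := by
    have e1 : (1 - M * D⁻¹ * N).det = (1 - N * (M * D⁻¹)).det :=
      Matrix.det_one_sub_mul_comm (M * D⁻¹) N
    have e2 : (1 : Matrix r r K) - N * (M * D⁻¹) = (D - N * M) * D⁻¹ := by
      rw [Matrix.sub_mul, hD1, Matrix.mul_assoc]
    rw [e1, e2, Matrix.det_mul]
  calc (A - M * N).det * D.det
      = A.det * ((D - N * M).det * D⁻¹.det) * D.det := by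
        rw [key1, Matrix.det_mul, key2]
    _ = A.det * (D - N * M).det * (D⁻¹.det * D.det) := by ring
    _ = A.det * (D - N * M).det := by
        rw [← Matrix.det_mul, hD2, Matrix.det_one, mul_one]

lemma rado_charmatrix_add {m : Type*} [Fintype m] [DecidableEq m]
    (A B : Matrix m m ℂ) :
    charmatrix (A + B) = charmatrix A - B.map C := by
  ext i j
  simp [charmatrix_apply, Matrix.map_apply, Matrix.sub_apply]
  ring

lemma rado_charmatrix_diagonal {m : Type*} [Fintype m] [DecidableEq m]
    (d : m → ℂ) :
    charmatrix (Matrix.diagonal d) = Matrix.diagonal (fun i => X - C (d i)) := by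
  ext i j
  by_cases h : i = j
  · subst h; simp
  · simp [h, charmatrix_apply_ne _ _ _ h, Matrix.diagonal_apply_ne _ h]

lemma rado_charpoly_diagonal {m : Type*} [Fintype m] [DecidableEq m]
    (d : m → ℂ) :
    (Matrix.diagonal d).charpoly = ∏ i : m, (X - C (d i)) := by
  rw [Matrix.charpoly, rado_charmatrix_diagonal, Matrix.det_diagonal]

theorem rado_charpoly (n r : ℕ) (hr : r ≤ n)
    (L : Matrix (Fin n) (Fin n) ℂ) (M : Matrix (Fin n) (Fin r) ℂ)
    (lam : Fin n → ℂ)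
    (hrank : LinearIndependent ℂ (fun j : Fin r => fun i : Fin n => M i j))
    (hM : L * M = M * Matrix.diagonal (fun j : Fin r => lam (Fin.castLE hr j)))
    (hchar : L.charpoly = ∏ i : Fin n, (X - C (lam i)))
    (N : Matrix (Fin r) (Fin n) ℂ) :
    (L + M * N).charpoly =
      (Matrix.diagonal (fun j : Fin r => lam (Fin.castLE hr j)) + N * M).charpoly *
        ∏ i ∈ Finset.univ.filter (fun i : Fin n => r ≤ (i : ℕ)), (X - C (lam i)) := by
  classical
  set d : Fin r → ℂ := fun j => lam (Fin.castLE hr j) with hd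
  set Λ : Matrix (Fin r) (Fin r) ℂ := Matrix.diagonal d with hΛ
  -- the main identity: charpoly (L + MN) * charpoly Λ = charpoly L * charpoly (Λ + NM)
  have main : (L + M * N).charpoly * Λ.charpoly = L.charpoly * (Λ + N * M).charpoly := by
    set K := FractionRing (Polynomial ℂ)
    set f : Polynomial ℂ →+* K := algebraMap (Polynomial ℂ) K with hf'
    have hf : Function.Injective f := IsFractionRing.injective (Polynomial ℂ) K
    apply hf
    -- intertwining relation for charmatrices
    have hLM : (L.map C) * (M.map C) = (M.map C) * (Λ.map C) := by
      rw [← Matrix.map_mul, ← Matrix.map_mul, hM]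
    have hscal : ∀ {p q : Type} [Fintype p] [Fintype q] [DecidableEq p] [DecidableEq q]
        (B : Matrix p q ℂ[X]),
        Matrix.scalar p (X : ℂ[X]) * B = B * Matrix.scalar q (X : ℂ[X]) := by
      intro p q _ _ _ _ B
      ext i j
      simp [Matrix.scalar, Matrix.diagonal_mul, Matrix.mul_diagonal, mul_comm]
    have hint : charmatrix L * (M.map C) = (M.map C) * charmatrix Λ := by
      simp only [charmatrix, RingHom.mapMatrix_apply]
      rw [Matrix.sub_mul, Matrix.mul_sub, hLM, hscal]
    have hcm1 : charmatrix (L + M * N) = charmatrix L - (M.map C) * (N.map C) := by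
      rw [rado_charmatrix_add, Matrix.map_mul]
    have hcm2 : charmatrix (Λ + N * M) = charmatrix Λ - (N.map C) * (M.map C) := by
      rw [rado_charmatrix_add, Matrix.map_mul]
    -- map everything to K
    have hdetL : ((charmatrix L).map f).det = f L.charpoly := (RingHom.map_det f _).symm
    have hdetΛ : ((charmatrix Λ).map f).det = f Λ.charpoly := (RingHom.map_det f _).symm
    have hA : IsUnit ((charmatrix L).map f).det := by
      rw [hdetΛ] at *
      rw [hdetL, isUnit_iff_ne_zero]
      intro h
      exact (Matrix.charpoly_monic L).ne_zero (hf (by simpa using h))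
    have hD : IsUnit ((charmatrix Λ).map f).det := by
      rw [hdetΛ, isUnit_iff_ne_zero]
      intro h
      exact (Matrix.charpoly_monic Λ).ne_zero (hf (by simpa using h))
    have hintK : ((charmatrix L).map f) * ((M.map C).map f)
        = ((M.map C).map f) * ((charmatrix Λ).map f) := by
      rw [← Matrix.map_mul, ← Matrix.map_mul, hint]
    have key := rado_det_key ((charmatrix L).map f) ((charmatrix Λ).map f)
      ((M.map C).map f) ((N.map C).map f) hA hD hintK
    have e1 : ((charmatrix L).map f) - ((M.map C).map f) * ((N.map C).map f)
        = (charmatrix (L + M * N)).map f := by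
      rw [hcm1, Matrix.map_sub _ (fun a b => map_sub f a b), Matrix.map_mul]
    have e2 : ((charmatrix Λ).map f) - ((N.map C).map f) * ((M.map C).map f)
        = (charmatrix (Λ + N * M)).map f := by
      rw [hcm2, Matrix.map_sub _ (fun a b => map_sub f a b), Matrix.map_mul]
    rw [e1, e2] at key
    rw [RingHom.map_mul, RingHom.map_mul, Matrix.charpoly, Matrix.charpoly, Matrix.charpoly,
      Matrix.charpoly, RingHom.map_det, RingHom.map_det, RingHom.map_det, RingHom.map_det]
    exact key
  -- rewrite charpoly Λ as a product
  have hΛprod : Λ.charpoly = ∏ j : Fin r, (X - C (d j)) := rado_charpoly_diagonal d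
  -- split the full product
  have hsplit : (∏ i : Fin n, (X - C (lam i)))
      = (∏ i ∈ Finset.univ.filter (fun i : Fin n => (i : ℕ) < r), (X - C (lam i)))
        * ∏ i ∈ Finset.univ.filter (fun i : Fin n => r ≤ (i : ℕ)), (X - C (lam i)) := by
    rw [← Finset.prod_filter_mul_prod_filter_not Finset.univ (fun i : Fin n => (i : ℕ) < r)]
    congr 1
    apply Finset.prod_congr _ (fun _ _ => rfl)
    apply Finset.filter_congr
    intro i _
    simp [not_lt]
  have hbij : (∏ j : Fin r, (X - C (d j)))
      = ∏ i ∈ Finset.univ.filter (fun i : Fin n => (i : ℕ) < r), (X - C (lam i)) := by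
    apply Finset.prod_nbij (fun j => Fin.castLE hr j)
    · intro a ha
      simp [Fin.castLE]
    · intro a _ b _ hab
      exact Fin.castLE_injective hr hab
    · intro i hi
      simp only [Finset.coe_filter, Finset.mem_univ, true_and, Set.mem_setOf_eq] at hi
      exact ⟨⟨(i : ℕ), hi⟩, by simp, by ext; simp [Fin.castLE]⟩
    · intro a ha
      simp [hd, Fin.castLE]
  set P1 := ∏ i ∈ Finset.univ.filter (fun i : Fin n => (i : ℕ) < r), (X - C (lam i)) with hP1
  set P2 := ∏ i ∈ Finset.univ.filter (fun i : Fin n => r ≤ (i : ℕ)), (X - C (lam i)) with hP2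
  have hP1ne : P1 ≠ 0 := by
    apply Polynomial.Monic.ne_zero
    exact Polynomial.monic_prod_of_monic _ _ (fun i _ => Polynomial.monic_X_sub_C (lam i))
  rw [hΛprod, hbij, hchar, hsplit] at main
  apply mul_right_cancel₀ hP1ne
  rw [main]
  ring
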